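/- Exact Laplacian mass of L_q: Let f(x) = exp(−2|x|) be the Laplacian, extended multiplicatively to ℝ². For any s > 0 and any positive integer q, it holds that f_s(L_q) = coth(2/s)·coth(q/s) + 2q·e^{2q/s}/(e^{2q/s} − 1)², where L_q := ∪_{z∈ℤ}((z,z) + qℤ²). -/

import Mathlib

noncomputable section

/-- The Laplacian function `f(x) = exp(-2|x|)`. -/
def lap (x : ℝ) : ℝ := Real.exp (-2 * |x|)

/-- The lattice `L_q = ∪_{z∈ℤ} ((z,z) + qℤ²) ⊂ ℝ²`. -/
def LqSet (q : ℕ) : Set (ℝ × ℝ) :=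
  {v | ∃ z w₁ w₂ : ℤ, v.1 = z + q * w₁ ∧ v.2 = z + q * w₂}

/-- `f_s(L_q)`: the sum over `L_q` of the multiplicative extension of `f` to `ℝ²`,
scaled by `s` (i.e. `f_s(x) = f(x/s)`). -/
def fsLq (f : ℝ → ℝ) (s : ℝ) (q : ℕ) : ℝ :=
  ∑' v : LqSet q, f ((v : ℝ × ℝ).1 / s) * f ((v : ℝ × ℝ).2 / s)

/-- `coth x = (e^x + e^{-x})/(e^x - e^{-x})`. -/
def coth' (x : ℝ) : ℝ := (Real.exp x + Real.exp (-x)) / (Real.exp x - Real.exp (-x))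

lemma inner_hasSum {t : ℝ} (h0 : 0 < t) (h1 : t < 1) (N : ℕ) :
    HasSum (fun a : ℤ => t ^ a.natAbs * t ^ (a + N).natAbs)
      (t ^ N * ((1 + t ^ 2) / (1 - t ^ 2) + N)) := by
  have ht2 : t ^ 2 < 1 := by nlinarith
  have ht2' : (0:ℝ) ≤ t ^ 2 := sq_nonneg t
  have hden : 1 - t ^ 2 ≠ 0 := by nlinarith
  -- nonnegative part
  have hf : HasSum (fun n : ℕ => t ^ ((n : ℤ)).natAbs * t ^ (((n : ℤ)) + N).natAbs)
      (t ^ N * (1 - t ^ 2)⁻¹) := by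
    have key : (fun n : ℕ => t ^ ((n:ℤ)).natAbs * t ^ (((n:ℤ)) + N).natAbs)
        = fun n : ℕ => t ^ N * (t ^ 2) ^ n := by
      funext n
      have e1 : ((n:ℤ)).natAbs = n := by omega
      have e2 : (((n:ℤ)) + N).natAbs = n + N := by omega
      rw [e1, e2, ← pow_mul, pow_add]; ring
    rw [key]
    exact (hasSum_geometric_of_lt_one ht2' ht2).mul_left (t ^ N)
  -- negative part
  have hg : HasSum (fun n : ℕ => t ^ (Int.negSucc n).natAbs * t ^ ((Int.negSucc n) + N).natAbs)
      (t ^ N * ((N : ℝ) + t ^ 2 / (1 - t ^ 2))) := by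
    rw [← hasSum_nat_add_iff' N]
    have key : (fun n : ℕ => t ^ (Int.negSucc (n + N)).natAbs * t ^ ((Int.negSucc (n + N)) + N).natAbs)
        = fun n : ℕ => (t ^ N * t ^ 2) * (t ^ 2) ^ n := by
      funext n
      have e1 : (Int.negSucc (n + N)).natAbs = n + N + 1 := Int.natAbs_negSucc _
      have e2 : ((Int.negSucc (n + N)) + N).natAbs = n + 1 := by
        rw [Int.negSucc_eq]; omega
      rw [e1, e2, ← pow_mul, pow_add, pow_add]; ring
    have hsum : ∑ i ∈ Finset.range N,
        t ^ (Int.negSucc i).natAbs * t ^ ((Int.negSucc i) + N).natAbs = N * t ^ N := by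
      have : ∀ i ∈ Finset.range N,
          t ^ (Int.negSucc i).natAbs * t ^ ((Int.negSucc i) + N).natAbs = t ^ N := by
        intro i hi
        have hiN : i < N := Finset.mem_range.mp hi
        have e1 : (Int.negSucc i).natAbs = i + 1 := Int.natAbs_negSucc _
        have e2 : ((Int.negSucc i) + N).natAbs = N - (i + 1) := by
          rw [Int.negSucc_eq]; omega
        rw [e1, e2, ← pow_add]
        congr 1; omega
      rw [Finset.sum_congr rfl this, Finset.sum_const, Finset.card_range, nsmul_eq_mul]
    rw [key, hsum]
    have : t ^ N * ((N : ℝ) + t ^ 2 / (1 - t ^ 2)) - N * t ^ N = t ^ N * t ^ 2 * (1 - t ^ 2)⁻¹ := by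
      field_simp; ring
    rw [this]
    exact (hasSum_geometric_of_lt_one ht2' ht2).mul_left _
  have := hf.int_rec hg
  have hfun : (Int.rec (fun n : ℕ => t ^ ((n : ℤ)).natAbs * t ^ (((n : ℤ)) + N).natAbs)
      (fun n : ℕ => t ^ (Int.negSucc n).natAbs * t ^ ((Int.negSucc n) + N).natAbs) : ℤ → ℝ)
      = fun a : ℤ => t ^ a.natAbs * t ^ (a + N).natAbs := by
    funext a; cases a <;> rfl
  rw [hfun] at this
  convert this using 1
  field_simp; ring

lemma inner_hasSum_int {t : ℝ} (h0 : 0 < t) (h1 : t < 1) (M : ℤ) :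
    HasSum (fun a : ℤ => t ^ a.natAbs * t ^ (a + M).natAbs)
      (t ^ M.natAbs * ((1 + t ^ 2) / (1 - t ^ 2) + M.natAbs)) := by
  obtain ⟨N, rfl | rfl⟩ := Int.eq_nat_or_neg M
  · simpa using inner_hasSum h0 h1 N
  · have base := inner_hasSum h0 h1 N
    have hcomp : (fun a : ℤ => t ^ a.natAbs * t ^ (a + -(N:ℤ)).natAbs) ∘ (Equiv.neg ℤ)
        = fun a : ℤ => t ^ a.natAbs * t ^ (a + N).natAbs := by
      funext a
      simp only [Function.comp_apply, Equiv.neg_apply]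
      congr 2
      · omega
      · omega
    have h3 : HasSum ((fun a : ℤ => t ^ a.natAbs * t ^ (a + -(N:ℤ)).natAbs) ∘ (Equiv.neg ℤ))
        (t ^ N * ((1 + t ^ 2) / (1 - t ^ 2) + N)) := by rw [hcomp]; exact base
    have h2 := (Equiv.hasSum_iff (Equiv.neg ℤ)).mp h3
    simpa using h2

lemma outer_hasSum {u : ℝ} (h0 : 0 ≤ u) (h1 : u < 1) (C Q : ℝ) :
    HasSum (fun m : ℤ => u ^ m.natAbs * (C + Q * m.natAbs))
      (C * (1 + u) / (1 - u) + 2 * Q * u / (1 - u) ^ 2) := by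
  have hden : 1 - u ≠ 0 := by nlinarith
  have hnorm : ‖u‖ < 1 := by rw [Real.norm_eq_abs, abs_of_nonneg h0]; exact h1
  have hgeo := hasSum_geometric_of_lt_one h0 h1
  have hmul := hasSum_coe_mul_geometric_of_norm_lt_one (𝕜 := ℝ) hnorm
  have hf : HasSum (fun n : ℕ => u ^ ((n:ℤ)).natAbs * (C + Q * ((n:ℤ)).natAbs))
      (C * (1 - u)⁻¹ + Q * (u / (1 - u) ^ 2)) := by
    have h := (hgeo.mul_left C).add (hmul.mul_left Q)
    have key : (fun n : ℕ => u ^ ((n:ℤ)).natAbs * (C + Q * ((n:ℤ)).natAbs))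
        = fun n : ℕ => C * u ^ n + Q * ((n : ℝ) * u ^ n) := by
      funext n
      have e1 : ((n:ℤ)).natAbs = n := by omega
      rw [e1]
      ring
    rw [key]; exact h
  have hg : HasSum (fun n : ℕ => u ^ (Int.negSucc n).natAbs * (C + Q * (Int.negSucc n).natAbs))
      (u * ((C + Q) * (1 - u)⁻¹ + Q * (u / (1 - u) ^ 2))) := by
    have h := ((hgeo.mul_left (C + Q)).add (hmul.mul_left Q)).mul_left u
    have key : (fun n : ℕ => u ^ (Int.negSucc n).natAbs * (C + Q * (Int.negSucc n).natAbs))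
        = fun n : ℕ => u * ((C + Q) * u ^ n + Q * ((n : ℝ) * u ^ n)) := by
      funext n
      have e1 : (Int.negSucc n).natAbs = n + 1 := Int.natAbs_negSucc _
      rw [e1]
      push_cast
      ring
    rw [key]; exact h
  have h := hf.int_rec hg
  have hfun : (Int.rec (fun n : ℕ => u ^ ((n:ℤ)).natAbs * (C + Q * ((n:ℤ)).natAbs))
      (fun n : ℕ => u ^ (Int.negSucc n).natAbs * (C + Q * (Int.negSucc n).natAbs)) : ℤ → ℝ)
      = fun m : ℤ => u ^ m.natAbs * (C + Q * m.natAbs) := by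
    funext m; cases m <;> rfl
  rw [hfun] at h
  convert h using 1
  field_simp
  ring

/-- Exact Laplacian mass of `L_q`:
`f_s(L_q) = coth(2/s)·coth(q/s) + 2q·e^{2q/s}/(e^{2q/s} − 1)²`. -/
theorem laplacian_mass_Lq (s : ℝ) (hs : 0 < s) (q : ℕ) (hq : 0 < q) :
    fsLq lap s q =
      coth' (2 / s) * coth' (q / s) +
        2 * q * Real.exp (2 * q / s) / (Real.exp (2 * q / s) - 1) ^ 2 := by
  have h2s : (0:ℝ) < 2 / s := by positivity
  set t : ℝ := Real.exp (-(2 / s)) with ht_def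
  have ht0 : 0 < t := Real.exp_pos _
  have ht1 : t < 1 := by rw [ht_def, Real.exp_lt_one_iff]; linarith
  set u : ℝ := t ^ q with hu_def
  have hu0' : 0 < u := pow_pos ht0 q
  have hu0 : 0 ≤ u := le_of_lt hu0'
  have hu1 : u < 1 := pow_lt_one₀ (le_of_lt ht0) ht1 hq.ne'
  have hut : 1 - t ^ 2 ≠ 0 := by nlinarith
  have huu : 1 - u ≠ 0 := by nlinarith
  -- lap at integers
  have lap_int : ∀ n : ℤ, lap ((n : ℝ) / s) = t ^ n.natAbs := by
    intro n
    have habs : |(n : ℝ) / s| = (n.natAbs : ℝ) / s := by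
      rw [abs_div, abs_of_pos hs, Nat.cast_natAbs, Int.cast_abs]
    rw [lap, habs, ht_def, ← Real.exp_nat_mul]
    congr 1; ring
  -- the bijection
  have hφmem : ∀ p : ℤ × ℤ, (((p.2 : ℝ), ((p.2 + q * p.1 : ℤ) : ℝ)) : ℝ × ℝ) ∈ LqSet q := by
    intro p; exact ⟨p.2, 0, p.1, by push_cast; ring, by push_cast; ring⟩
  set φ : ℤ × ℤ → LqSet q := fun p => ⟨((p.2 : ℝ), ((p.2 + q * p.1 : ℤ) : ℝ)), hφmem p⟩
    with hφ_def
  have hinj : Function.Injective φ := by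
    intro p p' h
    have hval := congrArg Subtype.val h
    have h1 : (p.2 : ℝ) = p'.2 := congrArg Prod.fst hval
    have h2 : ((p.2 + q * p.1 : ℤ) : ℝ) = ((p'.2 + q * p'.1 : ℤ) : ℝ) :=
      congrArg Prod.snd hval
    have e1 : p.2 = p'.2 := by exact_mod_cast h1
    have e2 : p.2 + (q:ℤ) * p.1 = p'.2 + (q:ℤ) * p'.1 := by exact_mod_cast h2
    have hq' : 0 < (q:ℤ) := by exact_mod_cast hq
    have e3 : p.1 = p'.1 := by
      have : (q:ℤ) * p.1 = (q:ℤ) * p'.1 := by omega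
      exact mul_left_cancel₀ hq'.ne' this
    exact Prod.ext e3 e1
  have hsurj : Function.Surjective φ := by
    rintro ⟨v, z, w₁, w₂, hv1, hv2⟩
    refine ⟨(w₂ - w₁, z + q * w₁), ?_⟩
    apply Subtype.ext
    apply Prod.ext
    · show ((z + q * w₁ : ℤ) : ℝ) = v.1
      rw [hv1]; push_cast; ring
    · show (((z + q * w₁) + q * (w₂ - w₁) : ℤ) : ℝ) = v.2
      rw [hv2]; push_cast; ring
  set e : ℤ × ℤ ≃ LqSet q := Equiv.ofBijective φ ⟨hinj, hsurj⟩ with he_def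
  -- rewrite the sum
  have hstep : fsLq lap s q = ∑' p : ℤ × ℤ, t ^ p.2.natAbs * t ^ (p.2 + q * p.1).natAbs := by
    rw [fsLq,
      ← Equiv.tsum_eq e (fun v : LqSet q => lap ((v : ℝ × ℝ).1 / s) * lap ((v : ℝ × ℝ).2 / s))]
    congr 1; funext p
    show lap ((p.2 : ℝ) / s) * lap (((p.2 + q * p.1 : ℤ) : ℝ) / s) = _
    rw [lap_int, lap_int]
  -- row sums
  have hrow : ∀ m : ℤ, HasSum (fun a : ℤ => t ^ a.natAbs * t ^ (a + (q:ℤ) * m).natAbs)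
      (u ^ m.natAbs * ((1 + t ^ 2) / (1 - t ^ 2) + (q:ℝ) * m.natAbs)) := by
    intro m
    have h := inner_hasSum_int ht0 ht1 ((q:ℤ) * m)
    have hN : ((q:ℤ) * m).natAbs = q * m.natAbs := by
      rw [Int.natAbs_mul]; simp
    have hval : t ^ ((q:ℤ) * m).natAbs * ((1 + t ^ 2) / (1 - t ^ 2) + (((q:ℤ) * m).natAbs : ℝ))
        = u ^ m.natAbs * ((1 + t ^ 2) / (1 - t ^ 2) + (q:ℝ) * m.natAbs) := by
      rw [hN, hu_def, pow_mul]; push_cast; ring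
    rw [← hval]; exact h
  have houter := outer_hasSum hu0 hu1 ((1 + t ^ 2) / (1 - t ^ 2)) (q:ℝ)
  -- summability over the product
  have hGnn : 0 ≤ fun p : ℤ × ℤ => t ^ p.2.natAbs * t ^ (p.2 + (q:ℤ) * p.1).natAbs := by
    intro p; positivity
  have hGsummable : Summable (fun p : ℤ × ℤ => t ^ p.2.natAbs * t ^ (p.2 + (q:ℤ) * p.1).natAbs) := by
    rw [summable_prod_of_nonneg hGnn]
    refine ⟨fun m => (hrow m).summable, ?_⟩
    have hre : (fun m : ℤ => ∑' a : ℤ, t ^ a.natAbs * t ^ (a + (q:ℤ) * m).natAbs)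
        = fun m : ℤ => u ^ m.natAbs * ((1 + t ^ 2) / (1 - t ^ 2) + (q:ℝ) * m.natAbs) := by
      funext m; exact (hrow m).tsum_eq
    rw [hre]; exact houter.summable
  have hsum : (∑' p : ℤ × ℤ, t ^ p.2.natAbs * t ^ (p.2 + (q:ℤ) * p.1).natAbs)
      = (1 + t ^ 2) / (1 - t ^ 2) * (1 + u) / (1 - u) + 2 * (q:ℝ) * u / (1 - u) ^ 2 := by
    rw [Summable.tsum_prod' hGsummable fun m => (hrow m).summable]
    rw [tsum_congr fun m => (hrow m).tsum_eq]
    exact houter.tsum_eq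
  rw [hstep, hsum]
  -- final algebra
  have he2 : Real.exp (2 / s) = t⁻¹ := by
    rw [show (2 / s : ℝ) = -(-(2 / s)) by ring, Real.exp_neg, ← ht_def]
  have hcoth1 : coth' (2 / s) = (1 + t ^ 2) / (1 - t ^ 2) := by
    rw [coth', he2, ← ht_def]
    have h1 : t⁻¹ - t ≠ 0 := by
      have : 1 < t⁻¹ := (one_lt_inv₀ ht0).mpr ht1
      nlinarith
    rw [div_eq_div_iff h1 hut]
    field_simp
  set w : ℝ := Real.exp (-(q / s)) with hw_def
  have hw0 : 0 < w := Real.exp_pos _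
  have hw1 : w < 1 := by
    rw [hw_def, Real.exp_lt_one_iff]
    have : (0:ℝ) < (q:ℝ) / s := by positivity
    linarith
  have hw2 : w ^ 2 = u := by
    rw [hw_def, hu_def, ht_def, ← Real.exp_nat_mul, ← Real.exp_nat_mul]
    congr 1; push_cast; ring
  have heq : Real.exp ((q:ℝ) / s) = w⁻¹ := by
    rw [show ((q:ℝ) / s) = -(-((q:ℝ) / s)) by ring, Real.exp_neg, ← hw_def]
  have hcoth2 : coth' ((q:ℝ) / s) = (1 + u) / (1 - u) := by
    rw [coth', heq, ← hw_def, ← hw2]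
    have h1 : w⁻¹ - w ≠ 0 := by
      have : 1 < w⁻¹ := (one_lt_inv₀ hw0).mpr hw1
      nlinarith
    have h2 : 1 - w ^ 2 ≠ 0 := by nlinarith
    rw [div_eq_div_iff h1 h2]
    field_simp
  have huexp : Real.exp (2 * (q:ℝ) / s) = u⁻¹ := by
    rw [show (2 * (q:ℝ) / s) = -(-(2 * (q:ℝ) / s)) by ring, Real.exp_neg]
    congr 1
    rw [hu_def, ht_def, ← Real.exp_nat_mul]
    congr 1; ring
  rw [hcoth1, hcoth2, huexp]
  have hui : u⁻¹ - 1 ≠ 0 := by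
    have : 1 < u⁻¹ := (one_lt_inv₀ hu0').mpr hu1
    nlinarith
  field_simp

end
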